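/- For every single-qubit Pauli matrix P₁ ∈ {X, Y, Z}, the single-qubit trap with a state-preparation Z-error satisfies (1/2) ∑_{t ∈ {0,1}} (1/2) ∑_{V ∈ {H,S}} |⟨+| H^t · V† · P₁ · V · H^t · Z |+⟩|² ≤ 3/4, where ⟨+| M |+⟩ denotes (conjugate-transpose of |+⟩) · M · |+⟩ for a 2 × 2 matrix M. (Inequality (multi1) of the paper: two-band errors of class 1 on one qubit are detected with probability at least 1/4.) -/

import Mathlib

set_option maxHeartbeats 4000000


open Matrix

/-- The Pauli matrix `X`. -/
noncomputable def Xm : Matrix (Fin 2) (Fin 2) ℂ := !![0, 1; 1, 0]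

/-- The Pauli matrix `Y`. -/
noncomputable def Ym : Matrix (Fin 2) (Fin 2) ℂ := !![0, -Complex.I; Complex.I, 0]

/-- The Pauli matrix `Z`. -/
noncomputable def Zm : Matrix (Fin 2) (Fin 2) ℂ := !![1, 0; 0, -1]

/-- The Hadamard matrix `H = (1/√2)!![1,1;1,-1]`. -/
noncomputable def Hm : Matrix (Fin 2) (Fin 2) ℂ :=
  (1 / ((Real.sqrt 2 : ℝ) : ℂ)) • !![1, 1; 1, -1]

/-- The phase matrix `S = diag(1, i)`. -/
noncomputable def Sm : Matrix (Fin 2) (Fin 2) ℂ := !![1, 0; 0, Complex.I]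

/-- The single-qubit state `|+⟩ = (1/√2)(1,1)`. -/
noncomputable def plus1 : Fin 2 → ℂ := fun _ => 1 / ((Real.sqrt 2 : ℝ) : ℂ)

/-- The matrix element `⟨+| M |+⟩` for a 2 × 2 matrix `M`. -/
noncomputable def plusBraket1 (M : Matrix (Fin 2) (Fin 2) ℂ) : ℂ :=
  ∑ x, ∑ y, star (plus1 x) * M x y * plus1 y

/-- **Inequality (multi1).** For every single-qubit Pauli error `P₁ ∈ {X, Y, Z}`, the
single-qubit trap with a state-preparation Z-error satisfies
`(1/2) ∑_{t∈{0,1}} (1/2) ∑_{V∈{H,S}} |⟨+| H^t V† P₁ V H^t Z |+⟩|² ≤ 3/4`. -/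
theorem class1_single_qubit_detection (P₁ : Matrix (Fin 2) (Fin 2) ℂ)
    (hP : P₁ = Xm ∨ P₁ = Ym ∨ P₁ = Zm) :
    (1 / 2 : ℝ) * ∑ t : Fin 2, (1 / 2) * ∑ v : Fin 2,
        ‖plusBraket1
          (Hm ^ (t : ℕ) * (![Hm, Sm] v)ᴴ * P₁ * ![Hm, Sm] v * Hm ^ (t : ℕ) * Zm)‖ ^ 2
      ≤ 3 / 4 := by
  have hs : ((Real.sqrt 2 : ℝ) : ℂ) ^ 2 = 2 := by
    norm_cast
    rw [Real.sq_sqrt] <;> norm_num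
  rcases hP with h | h | h <;> subst h <;>
    simp [Fin.sum_univ_two, plusBraket1, plus1, Hm, Sm, Xm, Ym, Zm, Matrix.mul_apply,
      Matrix.conjTranspose_apply, pow_succ, pow_zero, Matrix.one_mul, Matrix.smul_apply,
      Matrix.one_apply, Fin.isValue] <;>
    norm_num [Complex.norm_def, Complex.normSq, Complex.ext_iff] <;>
    simp only [Real.sqrt_mul_self_eq_abs, abs_mul_abs_self] <;>
    (ring_nf;
     simp only [show Real.sqrt 2 ^ 2 = 2 from Real.sq_sqrt (by norm_num),
       show Real.sqrt 2 ^ 4 = 4 by rw [(by ring : Real.sqrt 2 ^ 4 = (Real.sqrt 2 ^ 2) ^ 2), Real.sq_sqrt (by norm_num : (0:ℝ) ≤ 2)]; norm_num,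
       show Real.sqrt 2 ^ 6 = 8 by rw [(by ring : Real.sqrt 2 ^ 6 = (Real.sqrt 2 ^ 2) ^ 3), Real.sq_sqrt (by norm_num : (0:ℝ) ≤ 2)]; norm_num,
       show Real.sqrt 2 ^ 8 = 16 by rw [(by ring : Real.sqrt 2 ^ 8 = (Real.sqrt 2 ^ 2) ^ 4), Real.sq_sqrt (by norm_num : (0:ℝ) ≤ 2)]; norm_num,
       show Real.sqrt 2 ^ 10 = 32 by rw [(by ring : Real.sqrt 2 ^ 10 = (Real.sqrt 2 ^ 2) ^ 5), Real.sq_sqrt (by norm_num : (0:ℝ) ≤ 2)]; norm_num,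
       show Real.sqrt 2 ^ 12 = 64 by rw [(by ring : Real.sqrt 2 ^ 12 = (Real.sqrt 2 ^ 2) ^ 6), Real.sq_sqrt (by norm_num : (0:ℝ) ≤ 2)]; norm_num,
       show Real.sqrt 2 ^ 14 = 128 by rw [(by ring : Real.sqrt 2 ^ 14 = (Real.sqrt 2 ^ 2) ^ 7), Real.sq_sqrt (by norm_num : (0:ℝ) ≤ 2)]; norm_num,
       show Real.sqrt 2 ^ 16 = 256 by rw [(by ring : Real.sqrt 2 ^ 16 = (Real.sqrt 2 ^ 2) ^ 8), Real.sq_sqrt (by norm_num : (0:ℝ) ≤ 2)]; norm_num];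
     norm_num)
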